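/- Let G = ℤ/N'ℤ be a cyclic group of prime order with N' ∈ [4N, 8N], let f : G → ℂ be any function, and let P ⊆ {1,…,N} ⊆ G be an arithmetic progression with |P| ≥ ηN. Then |E_{n∈P} f(n)| ≤ C·η^{-1}·‖f‖_{U²(G)} for an absolute constant C, where ‖f‖_{U²(G)}⁴ = E_{x,h₁,h₂∈G} f(x) \overline{f(x+h₁)} \overline{f(x+h₂)} f(x+h₁+h₂). -/

import Mathlib

open Finset Complex Real

namespace Stmt19Aux

variable {M : ℕ} [NeZero M]

noncomputable def ec (x : ZMod M) : ℂ := ZMod.stdAddChar x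

lemma ec_add (x y : ZMod M) : ec (x + y) = ec x * ec y := AddChar.map_add_eq_mul _ _ _

lemma ec_zero : ec (0 : ZMod M) = 1 := AddChar.map_zero_eq_one _

lemma norm_ec (x : ZMod M) : ‖ec x‖ = 1 := by
  rw [ec, ZMod.stdAddChar_apply, Circle.norm_coe]

lemma ec_ne_zero (x : ZMod M) : ec x ≠ 0 := by
  intro h; simpa [h] using norm_ec x

lemma conj_ec (x : ZMod M) : (starRingEnd ℂ) (ec x) = ec (-x) := by
  have h1 : (starRingEnd ℂ) (ec x) * ec x = 1 := by
    rw [mul_comm, Complex.mul_conj]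
    norm_cast
    rw [← Complex.sq_norm, norm_ec]; norm_num
  have h2 : ec (-x) * ec x = 1 := by
    rw [← ec_add, neg_add_cancel, ec_zero]
  exact mul_right_cancel₀ (ec_ne_zero x) (h1.trans h2.symm)

lemma sum_ec (b : ZMod M) : ∑ x : ZMod M, ec (x * b) = if b = 0 then (M : ℂ) else 0 := by
  have := AddChar.sum_mulShift (ψ := ZMod.stdAddChar (N := M)) b (ZMod.isPrimitive_stdAddChar M)
  simpa [ec, ZMod.card M] using this

noncomputable def Sf (f : ZMod M → ℂ) (r : ZMod M) : ℂ := ∑ x, ec (r * x) * f x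

lemma S_mul_conj (f g : ZMod M → ℂ) (r : ZMod M) :
    Sf f r * (starRingEnd ℂ) (Sf g r) =
      ∑ x, ∑ y, ec (r * (x - y)) * (f x * (starRingEnd ℂ) (g y)) := by
  simp only [Sf, map_sum, map_mul, conj_ec, Finset.sum_mul_sum]
  refine sum_congr rfl fun x _ => sum_congr rfl fun y _ => ?_
  rw [show r * (x - y) = r * x + -(r * y) by ring, ec_add]
  ring

lemma pairing (f g : ZMod M → ℂ) :
    ∑ r : ZMod M, Sf f r * (starRingEnd ℂ) (Sf g r)
      = M * ∑ x : ZMod M, f x * (starRingEnd ℂ) (g x) := by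
  simp only [S_mul_conj]
  rw [Finset.sum_comm]
  have : ∀ x : ZMod M, ∑ r : ZMod M, ∑ y : ZMod M,
      ec (r * (x - y)) * (f x * (starRingEnd ℂ) (g y))
      = (M : ℂ) * (f x * (starRingEnd ℂ) (g x)) := by
    intro x
    rw [Finset.sum_comm]
    have h1 : ∀ y : ZMod M, ∑ r : ZMod M, ec (r * (x - y)) * (f x * (starRingEnd ℂ) (g y))
        = (if x - y = 0 then (M:ℂ) else 0) * (f x * (starRingEnd ℂ) (g y)) := by
      intro y
      rw [← Finset.sum_mul, sum_ec]
    simp only [h1, sub_eq_zero, ite_mul, zero_mul]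
    simp [Finset.sum_ite_eq univ x (fun y => (M:ℂ) * (f x * (starRingEnd ℂ) (g y)))]
  simp only [this]
  rw [← Finset.mul_sum]

lemma S_corr (f : ZMod M → ℂ) (r : ZMod M) :
    Sf (fun x => ∑ t, f t * (starRingEnd ℂ) (f (t - x))) r
      = Sf f r * (starRingEnd ℂ) (Sf f r) := by
  rw [S_mul_conj]
  simp only [Sf, Finset.mul_sum]
  rw [Finset.sum_comm]
  refine sum_congr rfl fun t _ => ?_
  refine Fintype.sum_equiv (Equiv.subLeft t) _ _ fun y => ?_
  simp only [Equiv.subLeft_apply, sub_sub_cancel]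

lemma corr_sq (f : ZMod M → ℂ) :
    ∑ x : ZMod M, ∑ h₁ : ZMod M, ∑ h₂ : ZMod M,
        f x * (starRingEnd ℂ) (f (x + h₁)) * (starRingEnd ℂ) (f (x + h₂)) * f (x + h₁ + h₂)
      = ∑ x : ZMod M, (∑ t, f t * (starRingEnd ℂ) (f (t - x))) *
          (starRingEnd ℂ) (∑ u, f u * (starRingEnd ℂ) (f (u - x))) := by
  have hR : ∀ x : ZMod M, (∑ t, f t * (starRingEnd ℂ) (f (t - x))) *
      (starRingEnd ℂ) (∑ u, f u * (starRingEnd ℂ) (f (u - x)))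
      = ∑ u, ∑ t, f t * (starRingEnd ℂ) (f (t - x)) * (starRingEnd ℂ) (f u) * f (u - x) := by
    intro x
    rw [map_sum, Finset.sum_mul_sum, Finset.sum_comm]
    refine sum_congr rfl fun u _ => sum_congr rfl fun t _ => ?_
    rw [map_mul, Complex.conj_conj]
    ring
  simp only [hR]
  -- reorder LHS sums: x h₁ h₂ → h₂ x h₁
  have swap1 : ∀ x : ZMod M, ∑ h₁ : ZMod M, ∑ h₂ : ZMod M,
      f x * (starRingEnd ℂ) (f (x + h₁)) * (starRingEnd ℂ) (f (x + h₂)) * f (x + h₁ + h₂)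
      = ∑ h₂ : ZMod M, ∑ h₁ : ZMod M,
      f x * (starRingEnd ℂ) (f (x + h₁)) * (starRingEnd ℂ) (f (x + h₂)) * f (x + h₁ + h₂) :=
    fun x => Finset.sum_comm
  simp only [swap1]
  rw [Finset.sum_comm]
  refine sum_congr rfl fun x _ => ?_
  -- now: ∑ a, ∑ h₁, f a * conj f (a+h₁) * conj f (a+x) * f (a+h₁+x)
  --    = ∑ u, ∑ t, f t * conj f (t-x) * conj f u * f (u-x)
  refine Fintype.sum_equiv (Equiv.addRight x) _ _ fun a => ?_
  simp only [Equiv.coe_addRight, add_sub_cancel_right]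
  refine Fintype.sum_equiv (Equiv.addLeft (a + x)) _ _ fun h₁ => ?_
  simp only [Equiv.coe_addLeft]
  have e1 : a + x + h₁ - x = a + h₁ := by ring
  have e2 : a + h₁ + x = a + x + h₁ := by ring
  rw [e1, e2]
  ring

lemma u2 (f : ZMod M → ℂ) :
    (M : ℂ) * ∑ x : ZMod M, ∑ h₁ : ZMod M, ∑ h₂ : ZMod M,
        f x * (starRingEnd ℂ) (f (x + h₁)) * (starRingEnd ℂ) (f (x + h₂)) * f (x + h₁ + h₂)
      = ∑ r : ZMod M, ((‖Sf f r‖ : ℂ)) ^ 4 := by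
  have key : ∀ r : ZMod M, ((‖Sf f r‖ : ℂ)) ^ 4
      = Sf (fun x => ∑ t, f t * (starRingEnd ℂ) (f (t - x))) r *
        (starRingEnd ℂ) (Sf (fun x => ∑ t, f t * (starRingEnd ℂ) (f (t - x))) r) := by
    intro r
    rw [S_corr]
    rw [map_mul, Complex.conj_conj]
    rw [show Sf f r * (starRingEnd ℂ) (Sf f r) * ((starRingEnd ℂ) (Sf f r) * Sf f r)
        = (Sf f r * (starRingEnd ℂ) (Sf f r)) ^ 2 by ring]
    rw [Complex.mul_conj]
    rw [Complex.normSq_eq_norm_sq]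
    norm_cast
    ring
  simp only [key]
  rw [pairing, corr_sq]




lemma norm_exp_theta (θ : ℝ) (h0 : 0 ≤ θ) (h1 : θ ≤ 2*π) :
    ‖Complex.exp (θ * Complex.I) - 1‖ = 2 * Real.sin (θ/2) := by
  have hz : Complex.exp (θ*Complex.I) - 1 = ((Real.cos θ - 1 : ℝ) : ℂ) + (Real.sin θ : ℝ)*Complex.I := by
    rw [Complex.exp_mul_I, ← Complex.ofReal_cos, ← Complex.ofReal_sin]
    push_cast
    ring
  rw [Complex.norm_def, hz, Complex.normSq_add_mul_I]
  have h2 : (Real.cos θ - 1)^2 + (Real.sin θ)^2 = 4 * ((1 - Real.cos θ)/2) := by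
    have := Real.sin_sq_add_cos_sq θ; nlinarith
  rw [h2, Real.sqrt_mul (by norm_num), Real.sin_half_eq_sqrt h0 h1,
    show (4:ℝ) = 2^2 by norm_num, Real.sqrt_sq (by norm_num : (0:ℝ) ≤ 2)]

lemma norm_geom_sum {z : ℂ} (hz : ‖z‖ = 1) (hz1 : z ≠ 1) (L : ℕ) :
    ‖∑ i ∈ Finset.range L, z^i‖ ≤ 2 / ‖z - 1‖ := by
  rw [geom_sum_eq hz1, norm_div]
  have hpos : 0 < ‖z - 1‖ := norm_pos_iff.2 (sub_ne_zero.2 hz1)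
  have hnum : ‖z^L - 1‖ ≤ 2 := by
    calc ‖z^L - 1‖ ≤ ‖z^L‖ + ‖(1:ℂ)‖ := norm_sub_le _ _
    _ = 2 := by rw [norm_pow, hz]; norm_num
  gcongr

lemma zeta_tail (K : ℕ) : ∑ k ∈ Finset.Icc 1 K, ((k:ℝ)) ^ (-(4:ℝ)/3) ≤ 4 := by
  rcases Nat.eq_zero_or_pos K with hK | hK
  · simp [hK]
  have hins : Finset.Icc 1 K = insert 1 (Finset.Icc 2 K) := by
    ext x; simp [Finset.mem_Icc, Finset.mem_insert]; omega
  rw [hins, Finset.sum_insert (by simp)]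
  have h1 : ((1:ℕ):ℝ) ^ (-(4:ℝ)/3) = 1 := by norm_num
  rw [h1]
  have hIco : Finset.Icc 2 K = Finset.Ico 2 (K+1) := by rw [Finset.Ico_add_one_right_eq_Icc]
  rw [hIco, Finset.sum_Ico_eq_sum_range]
  have hanti : AntitoneOn (fun x : ℝ => x ^ (-(4:ℝ)/3)) (Set.Icc 1 (1 + (K-1 : ℕ))) := by
    intro x hx y hy hxy
    exact Real.rpow_le_rpow_of_nonpos (lt_of_lt_of_le zero_lt_one hx.1) hxy (by norm_num)
  have hkey := hanti.sum_le_integral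
  have hsum : ∑ i ∈ Finset.range (K + 1 - 2), (((2 + i : ℕ):ℝ)) ^ (-(4:ℝ)/3)
      = ∑ i ∈ Finset.range (K-1), ((1:ℝ) + ((i+1 : ℕ):ℝ)) ^ (-(4:ℝ)/3) := by
    have : K + 1 - 2 = K - 1 := by omega
    rw [this]
    refine Finset.sum_congr rfl fun i _ => ?_
    push_cast; ring_nf
  rw [hsum]
  have hb : (1:ℝ) ≤ 1 + (K-1 : ℕ) := le_add_of_nonneg_right (Nat.cast_nonneg _)
  have hint : (∫ x in (1:ℝ)..(1 + (K-1:ℕ)), x ^ (-(4:ℝ)/3)) ≤ 3 := by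
    rw [integral_rpow (Or.inr ⟨by norm_num, by
      rw [Set.uIcc_of_le hb]
      intro h
      exact absurd h.1 (by norm_num)⟩)]
    have hnn : (0:ℝ) ≤ ((1:ℝ) + (K-1:ℕ)) ^ (-(4:ℝ)/3 + 1) := Real.rpow_nonneg (by positivity) _
    have : ((1:ℝ)) ^ (-(4:ℝ)/3 + 1) = 1 := Real.one_rpow _
    rw [this]
    rw [show (-(4:ℝ)/3 + 1) = -(1/3) by norm_num] at hnn ⊢
    nlinarith
  linarith [hkey.trans hint]





lemma ec_eq_exp (s : ZMod M) :
    ec s = Complex.exp (((2*π*s.val/M : ℝ) : ℂ) * Complex.I) := by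
  rw [ec, ZMod.stdAddChar_apply, ZMod.toCircle_apply]
  norm_cast
  congr 1
  push_cast
  ring

lemma ec_nat_mul (i : ℕ) (t : ZMod M) : ec ((i : ZMod M) * t) = ec t ^ i := by
  induction i with
  | zero => simpa using ec_zero
  | succ n ih =>
    have h : ((n+1 : ℕ) : ZMod M) * t = (n : ZMod M) * t + t := by push_cast; ring
    rw [h, ec_add, ih, pow_succ]

lemma norm_ec_sub_one (s : ZMod M) :
    4 * (min (s.val : ℝ) ((M:ℝ) - s.val)) / M ≤ ‖ec s - 1‖ := by
  have hM : (0:ℝ) < M := Nat.cast_pos.2 (Nat.pos_of_ne_zero (NeZero.ne M))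
  have hv : (s.val : ℝ) < M := Nat.cast_lt.2 (ZMod.val_lt s)
  have hv0 : (0:ℝ) ≤ s.val := Nat.cast_nonneg _
  have h0 : 0 ≤ 2*π*(s.val:ℝ)/M := by positivity
  have h1 : 2*π*(s.val:ℝ)/M ≤ 2*π := by
    rw [div_le_iff₀ hM]; nlinarith [pi_pos]
  rw [ec_eq_exp, norm_exp_theta _ h0 h1]
  have hhalf : (2*π*(s.val:ℝ)/M)/2 = π * ((s.val:ℝ)/M) := by ring
  rw [hhalf]
  rcases le_or_gt (2*(s.val:ℝ)) M with h | h
  · rw [min_eq_left (by linarith)]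
    have hx1 : π * ((s.val:ℝ)/M) ≤ π/2 := by
      have h2 : (s.val:ℝ)/M ≤ 1/2 := by rw [div_le_div_iff₀ hM (by norm_num)]; linarith
      nlinarith [pi_pos]
    have hs := Real.mul_le_sin (by positivity) hx1
    have heq : 2/π * (π * ((s.val:ℝ)/M)) = 2*(s.val:ℝ)/M := by field_simp
    rw [heq] at hs
    have e4 : 4 * (s.val:ℝ)/M = 2*(2*(s.val:ℝ)/M) := by ring
    rw [e4]; linarith
  · rw [min_eq_right (by linarith)]
    have hsin : Real.sin (π * ((s.val:ℝ)/M)) = Real.sin (π * (((M:ℝ) - s.val)/M)) := by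
      rw [← Real.sin_pi_sub]; congr 1; field_simp
    rw [hsin]
    have hx1 : π * (((M:ℝ) - s.val)/M) ≤ π/2 := by
      have h2 : ((M:ℝ) - s.val)/M ≤ 1/2 := by rw [div_le_div_iff₀ hM (by norm_num)]; linarith
      nlinarith [pi_pos]
    have hs := Real.mul_le_sin
      (mul_nonneg Real.pi_pos.le (div_nonneg (by linarith) hM.le)) hx1
    have heq : 2/π * (π * (((M:ℝ) - s.val)/M)) = 2*((M:ℝ) - (s.val:ℝ))/M := by field_simp
    rw [heq] at hs
    have e4 : 4 * ((M:ℝ) - (s.val:ℝ))/M = 2*(2*((M:ℝ) - (s.val:ℝ))/M) := by ring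
    rw [e4]; linarith

lemma sum_comp_le (t : Finset (ZMod M)) (φ : ZMod M → ℕ)
    (hinj : ∀ x ∈ t, ∀ y ∈ t, φ x = φ y → x = y)
    (hrange : ∀ x ∈ t, φ x ∈ Finset.Icc 1 M) :
    ∑ s ∈ t, ((M:ℝ)/(2*(φ s : ℝ)))^((4:ℝ)/3)
      ≤ ∑ k ∈ Finset.Icc 1 M, ((M:ℝ)/(2*(k:ℝ)))^((4:ℝ)/3) := by
  rw [show (∑ s ∈ t, ((M:ℝ)/(2*(φ s : ℝ)))^((4:ℝ)/3))
      = ∑ k ∈ t.image φ, ((M:ℝ)/(2*(k:ℝ)))^((4:ℝ)/3) from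
      (Finset.sum_image (f := fun k : ℕ => ((M:ℝ)/(2*(k:ℝ)))^((4:ℝ)/3)) hinj).symm]
  apply Finset.sum_le_sum_of_subset_of_nonneg
  · intro k hk
    obtain ⟨s, hs, rfl⟩ := Finset.mem_image.1 hk
    exact hrange s hs
  · intro k _ _
    exact Real.rpow_nonneg (by positivity) _

lemma sum_min_bound (hM1 : (1:ℝ) ≤ M) :
    ∑ s ∈ Finset.univ.erase (0 : ZMod M),
        ((M:ℝ)/(2 * min (s.val:ℝ) ((M:ℝ) - s.val))) ^ ((4:ℝ)/3)
      ≤ 8 * (M:ℝ)^((4:ℝ)/3) := by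
  have hM : (0:ℝ) < M := by linarith
  have hstep : ∀ s ∈ Finset.univ.erase (0 : ZMod M),
      ((M:ℝ)/(2 * min (s.val:ℝ) ((M:ℝ) - s.val))) ^ ((4:ℝ)/3)
        ≤ ((M:ℝ)/(2 * ((s.val : ℕ):ℝ))) ^ ((4:ℝ)/3)
          + ((M:ℝ)/(2 * (((M - s.val : ℕ)):ℝ))) ^ ((4:ℝ)/3) := by
    intro s hs
    have hs0 : s ≠ 0 := Finset.ne_of_mem_erase hs
    have hv1 : (1:ℝ) ≤ s.val := by
      have h' : s.val ≠ 0 := fun hh => hs0 ((ZMod.val_eq_zero s).1 hh)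
      exact_mod_cast Nat.one_le_iff_ne_zero.2 h'
    have hv : (s.val : ℝ) < M := Nat.cast_lt.2 (ZMod.val_lt s)
    have hcast : (((M - s.val : ℕ)):ℝ) = (M:ℝ) - s.val := by
      rw [Nat.cast_sub (ZMod.val_lt s).le]
    rw [hcast]
    rcases min_cases ((s.val:ℝ)) ((M:ℝ) - s.val) with ⟨hmin, _⟩ | ⟨hmin, _⟩ <;> rw [hmin]
    · exact le_add_of_nonneg_right (Real.rpow_nonneg (div_nonneg (by linarith) (by linarith)) _)
    · exact le_add_of_nonneg_left (Real.rpow_nonneg (div_nonneg (by linarith) (by linarith)) _)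
  refine (Finset.sum_le_sum hstep).trans ?_
  rw [Finset.sum_add_distrib]
  have Zdef : ∑ k ∈ Finset.Icc 1 M, ((M:ℝ)/(2 * (k:ℝ))) ^ ((4:ℝ)/3) ≤ 4 * (M:ℝ)^((4:ℝ)/3) := by
    have hterm : ∀ k ∈ Finset.Icc 1 M, ((M:ℝ)/(2 * (k:ℝ))) ^ ((4:ℝ)/3)
        = ((M:ℝ)/2) ^ ((4:ℝ)/3) * ((k:ℝ)) ^ (-(4:ℝ)/3) := by
      intro k hk
      have hk1 : 1 ≤ k := (Finset.mem_Icc.1 hk).1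
      have hk0 : (0:ℝ) < k := by exact_mod_cast hk1
      rw [show (M:ℝ)/(2*(k:ℝ)) = (M/2) * ((k:ℝ))⁻¹ by field_simp,
        Real.mul_rpow (by linarith : (0:ℝ) ≤ (M:ℝ)/2) (inv_nonneg.2 hk0.le),
        show (-(4:ℝ)/3) = -((4:ℝ)/3) by ring, Real.rpow_neg hk0.le,
        Real.inv_rpow hk0.le]
    rw [Finset.sum_congr rfl hterm, ← Finset.mul_sum]
    have hZ := zeta_tail M
    have hb : ((M:ℝ)/2) ^ ((4:ℝ)/3) ≤ (M:ℝ)^((4:ℝ)/3) :=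
      Real.rpow_le_rpow (by positivity) (by linarith) (by norm_num)
    have hsum_nonneg : (0:ℝ) ≤ ∑ k ∈ Finset.Icc 1 M, ((k:ℝ)) ^ (-(4:ℝ)/3) :=
      Finset.sum_nonneg fun k _ => Real.rpow_nonneg (Nat.cast_nonneg _) _
    calc ((M:ℝ)/2) ^ ((4:ℝ)/3) * ∑ k ∈ Finset.Icc 1 M, ((k:ℝ)) ^ (-(4:ℝ)/3)
        ≤ (M:ℝ)^((4:ℝ)/3) * 4 :=
          mul_le_mul hb hZ hsum_nonneg (Real.rpow_nonneg (by positivity) _)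
      _ = 4 * (M:ℝ)^((4:ℝ)/3) := by ring
  have hmem : ∀ s ∈ Finset.univ.erase (0 : ZMod M), 1 ≤ s.val ∧ s.val < M := by
    intro s hs
    have hs0 : s ≠ 0 := Finset.ne_of_mem_erase hs
    exact ⟨Nat.one_le_iff_ne_zero.2 (fun hh => hs0 ((ZMod.val_eq_zero s).1 hh)), ZMod.val_lt s⟩
  have h1 := sum_comp_le (Finset.univ.erase (0 : ZMod M)) (fun s => s.val)
    (fun x _ y _ h => ZMod.val_injective M h)
    (fun x hx => Finset.mem_Icc.2 ⟨(hmem x hx).1, (hmem x hx).2.le⟩)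
  have hinj2 : ∀ x ∈ Finset.univ.erase (0 : ZMod M), ∀ y ∈ Finset.univ.erase (0 : ZMod M),
      M - x.val = M - y.val → x = y := by
    intro x hx y hy h
    have hx' := (hmem x hx).2
    have hy' := (hmem y hy).2
    exact ZMod.val_injective M (by omega)
  have hrange2 : ∀ x ∈ Finset.univ.erase (0 : ZMod M), M - x.val ∈ Finset.Icc 1 M := by
    intro x hx
    have h1' := (hmem x hx).1
    have h2' := (hmem x hx).2
    exact Finset.mem_Icc.2 ⟨by omega, by omega⟩
  have h2 := sum_comp_le (Finset.univ.erase (0 : ZMod M)) (fun s => M - s.val) hinj2 hrange2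
  beta_reduce at h1 h2
  linarith

lemma sum_l43 (hM : M.Prime) (a d : ZMod M) (L : ℕ) (hL : L ≤ M)
    (hd : 2 ≤ L → d ≠ 0) :
    ∑ r : ZMod M, ‖∑ i ∈ Finset.range L, ec (r * (a + (i : ZMod M) * d))‖ ^ ((4:ℝ)/3)
      ≤ 10 * (M:ℝ) ^ ((4:ℝ)/3) := by
  have hM2 : 2 ≤ M := hM.two_le
  have hM1R : (1:ℝ) ≤ M := by exact_mod_cast Nat.one_le_of_lt hM2
  have hMR : (0:ℝ) < M := by linarith
  have hrpow_nonneg : (0:ℝ) ≤ (M:ℝ)^((4:ℝ)/3) := Real.rpow_nonneg (by linarith) _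
  have hMfour : (M:ℝ) ≤ (M:ℝ)^((4:ℝ)/3) := by
    nth_rewrite 1 [show (M:ℝ) = (M:ℝ)^((1:ℝ)) from (Real.rpow_one _).symm]
    exact Real.rpow_le_rpow_of_exponent_le hM1R (by norm_num)
  rcases lt_or_ge L 2 with hL2 | hL2
  · interval_cases L
    · simp only [Finset.range_zero, Finset.sum_empty, norm_zero]
      rw [Real.zero_rpow (by norm_num)]
      simp only [Finset.sum_const, smul_zero]
      positivity
    · have hone : ∀ r : ZMod M, ‖∑ i ∈ Finset.range 1, ec (r * (a + (i : ZMod M) * d))‖ ^ ((4:ℝ)/3) = 1 := by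
        intro r
        rw [Finset.sum_range_one, norm_ec, Real.one_rpow]
      rw [Finset.sum_congr rfl (fun r _ => hone r), Finset.sum_const]
      simp only [Finset.card_univ, ZMod.card, nsmul_eq_mul, mul_one]
      linarith
  · have hd' : d ≠ 0 := hd hL2
    haveI := Fact.mk hM
    have key : ∀ r : ZMod M, r ≠ 0 →
        ‖∑ i ∈ Finset.range L, ec (r * (a + (i : ZMod M) * d))‖
          ≤ (M:ℝ)/(2 * min (((r*d).val:ℝ)) ((M:ℝ) - (r*d).val)) := by
      intro r hr
      have hfactor : ∀ i : ℕ, ec (r * (a + (i:ZMod M) * d)) = ec (r*a) * ec (r*d) ^ i := by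
        intro i
        rw [show r * (a + (i:ZMod M)*d) = r*a + (i:ZMod M)*(r*d) by ring, ec_add, ec_nat_mul]
      rw [Finset.sum_congr rfl (fun i _ => hfactor i), ← Finset.mul_sum, norm_mul, norm_ec, one_mul]
      have hs0 : r * d ≠ 0 := mul_ne_zero hr hd'
      have hz1 : ec (r*d) ≠ 1 := by
        intro h
        exact hs0 (ZMod.injective_stdAddChar
          (show ZMod.stdAddChar (r*d) = ZMod.stdAddChar (0 : ZMod M) from by
            rw [show (ZMod.stdAddChar (r*d) : ℂ) = ec (r*d) from rfl,
              show (ZMod.stdAddChar (0:ZMod M) : ℂ) = ec (0:ZMod M) from rfl, h, ec_zero]))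
      have hgeo := norm_geom_sum (norm_ec (r*d)) hz1 L
      have hlow := norm_ec_sub_one (r*d)
      have hval1 : (1:ℝ) ≤ ((r*d).val : ℝ) := by
        have h' : (r*d).val ≠ 0 := fun hh => hs0 ((ZMod.val_eq_zero _).1 hh)
        exact_mod_cast Nat.one_le_iff_ne_zero.2 h'
      have hvalM : (((r*d).val):ℝ) < M := Nat.cast_lt.2 (ZMod.val_lt _)
      have hminpos : (0:ℝ) < min (((r*d).val:ℝ)) ((M:ℝ) - (r*d).val) :=
        lt_min (by linarith) (by linarith)
      have hlow' : (0:ℝ) < 4 * (min (((r*d).val:ℝ)) ((M:ℝ) - (r*d).val)) / M := by positivity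
      refine hgeo.trans ?_
      have step : 2/‖ec (r*d) - 1‖ ≤ 2/(4 * (min (((r*d).val:ℝ)) ((M:ℝ) - (r*d).val)) / M) :=
        div_le_div_of_nonneg_left (by norm_num) hlow' hlow
      refine step.trans_eq ?_
      field_simp
      ring
    rw [← Finset.add_sum_erase _ _ (Finset.mem_univ (0:ZMod M))]
    have hzero : ‖∑ i ∈ Finset.range L, ec ((0:ZMod M) * (a + (i : ZMod M) * d))‖ ^ ((4:ℝ)/3)
        ≤ (M:ℝ)^((4:ℝ)/3) := by
      have : ∀ i : ℕ, ec ((0:ZMod M) * (a + (i : ZMod M) * d)) = 1 := by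
        intro i; rw [zero_mul, ec_zero]
      rw [Finset.sum_congr rfl (fun i _ => this i), Finset.sum_const, Finset.card_range,
        nsmul_eq_mul, mul_one, Complex.norm_natCast]
      exact Real.rpow_le_rpow (Nat.cast_nonneg _) (Nat.cast_le.2 hL) (by norm_num)
    have hrest : ∑ r ∈ Finset.univ.erase (0:ZMod M),
        ‖∑ i ∈ Finset.range L, ec (r * (a + (i : ZMod M) * d))‖ ^ ((4:ℝ)/3)
        ≤ 8 * (M:ℝ)^((4:ℝ)/3) := by
      have h1 : ∑ r ∈ Finset.univ.erase (0:ZMod M),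
          ‖∑ i ∈ Finset.range L, ec (r * (a + (i : ZMod M) * d))‖ ^ ((4:ℝ)/3)
          ≤ ∑ r ∈ Finset.univ.erase (0:ZMod M),
            ((M:ℝ)/(2 * min (((r*d).val:ℝ)) ((M:ℝ) - (r*d).val))) ^ ((4:ℝ)/3) := by
        refine Finset.sum_le_sum fun r hr => ?_
        exact Real.rpow_le_rpow (norm_nonneg _) (key r (Finset.ne_of_mem_erase hr)) (by norm_num)
      refine h1.trans ?_
      have h2 : ∑ r ∈ Finset.univ.erase (0:ZMod M),
          ((M:ℝ)/(2 * min (((r*d).val:ℝ)) ((M:ℝ) - (r*d).val))) ^ ((4:ℝ)/3)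
          = ∑ s ∈ Finset.univ.erase (0:ZMod M),
            ((M:ℝ)/(2 * min ((s.val:ℝ)) ((M:ℝ) - s.val))) ^ ((4:ℝ)/3) := by
        refine Finset.sum_equiv (Equiv.mulRight₀ d hd') ?_ ?_
        · intro r
          simp only [Finset.mem_erase, Finset.mem_univ, and_true, Equiv.mulRight₀_apply,
            ne_eq, mul_eq_zero, not_or]
          constructor
          · intro h; exact ⟨h, hd'⟩
          · intro h; exact h.1
        · intro r _
          rfl
      rw [h2]
      exact sum_min_bound hM1R
    linarith


end Stmt19Aux

open Stmt19Aux in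
/-- If `G = ℤ/N'ℤ` with `N'` prime, `N' ∈ [4N, 8N]`, and `P ⊆ {1,…,N}` is an arithmetic
progression with `|P| ≥ ηN`, then `|E_{n∈P} f(n)| ≤ C η⁻¹ ‖f‖_{U²(G)}` for an absolute
constant `C`. -/
theorem stmt_19 : ∃ C : ℝ, 0 < C ∧ ∀ (N N' : ℕ) [NeZero N'], 1 ≤ N → N'.Prime →
    4 * N ≤ N' → N' ≤ 8 * N →
    ∀ f : ZMod N' → ℂ, ∀ η : ℝ, 0 < η → ∀ (P : Finset ℤ) (a d : ℤ) (L : ℕ),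
    P = (Finset.range L).image (fun i : ℕ => a + (i : ℤ) * d) →
    P ⊆ Finset.Icc (1 : ℤ) N → η * N ≤ (P.card : ℝ) →
    ‖(P.card : ℂ)⁻¹ * ∑ n ∈ P, f (n : ZMod N')‖ ≤
      C * η⁻¹ *
        ‖(1 / (N' : ℂ) ^ 3) * ∑ x : ZMod N', ∑ h₁ : ZMod N', ∑ h₂ : ZMod N',
            f x * (starRingEnd ℂ) (f (x + h₁)) * (starRingEnd ℂ) (f (x + h₂)) *
              f (x + h₁ + h₂)‖ ^ ((1 : ℝ) / 4) := by
  refine ⟨100, by norm_num, ?_⟩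
  intro N M _ hN hMp h4 h8 f η hη P a d L hP hPN hcard
  have hM2 : 2 ≤ M := hMp.two_le
  have hMR : (0:ℝ) < M := by positivity
  have hNR : (0:ℝ) < N := by exact_mod_cast hN
  have hNM : N < M := by omega
  have hNMZ : (N:ℤ) < (M:ℤ) := by exact_mod_cast hNM
  have hcard_pos : 0 < P.card := by
    rcases Nat.eq_zero_or_pos P.card with h | h
    · exfalso
      rw [h] at hcard
      push_cast at hcard
      nlinarith
    · exact h
  have hcardR : (0:ℝ) < P.card := by exact_mod_cast hcard_pos
  have hcardN : P.card ≤ N := by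
    have := Finset.card_le_card hPN
    rwa [Int.card_Icc, show ((N:ℤ) + 1 - 1) = (N:ℤ) by ring, Int.toNat_natCast] at this
  -- cast ℤ → ZMod M is injective on P
  have hcastinj : ∀ x ∈ P, ∀ y ∈ P, (x : ZMod M) = (y : ZMod M) → x = y := by
    intro x hx y hy hxy
    have hx' := Finset.mem_Icc.1 (hPN hx)
    have hy' := Finset.mem_Icc.1 (hPN hy)
    have hdvd : (M:ℤ) ∣ y - x := (ZMod.intCast_eq_intCast_iff x y M).1 hxy |>.dvd
    have : y - x = 0 := Int.eq_zero_of_abs_lt_dvd hdvd (by rw [abs_lt]; omega)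
    omega
  -- normal form for the progression
  obtain ⟨a', d', L', hPrep, hInj, hdz⟩ :
      ∃ (a' d' : ℤ) (L' : ℕ), P = (Finset.range L').image (fun i : ℕ => a' + (i:ℤ) * d') ∧
        (∀ i ∈ Finset.range L', ∀ j ∈ Finset.range L',
          a' + (i:ℤ) * d' = a' + (j:ℤ) * d' → i = j) ∧
        (2 ≤ L' → (d' : ZMod M) ≠ 0) := by
    by_cases hc2 : 2 ≤ P.card
    · have hd0 : d ≠ 0 := by
        intro hd0
        rw [hd0] at hP
        have : P ⊆ {a} := by
          rw [hP]
          intro x hx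
          obtain ⟨i, _, rfl⟩ := Finset.mem_image.1 hx
          simp
        have := Finset.card_le_card this
        simp at this
        omega
      have hinj : ∀ i ∈ Finset.range L, ∀ j ∈ Finset.range L,
          a + (i:ℤ) * d = a + (j:ℤ) * d → i = j := by
        intro i _ j _ hij
        have : (i:ℤ) = j := by
          have := mul_right_cancel₀ hd0 (by linarith : (i:ℤ) * d = (j:ℤ) * d)
          exact this
        exact_mod_cast this
      have hL2 : 2 ≤ L := by
        by_contra hL2
        push_neg at hL2
        interval_cases L <;> rw [hP] at hc2 <;> simp at hc2 <;> omega
      have hmem0 : a ∈ P := by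
        rw [hP]; exact Finset.mem_image.2 ⟨0, Finset.mem_range.2 (by omega), by simp⟩
      have hmem1 : a + d ∈ P := by
        rw [hP]; exact Finset.mem_image.2 ⟨1, Finset.mem_range.2 (by omega), by simp⟩
      have hdM : (d : ZMod M) ≠ 0 := by
        intro hdM
        have hdvd : (M:ℤ) ∣ d := (ZMod.intCast_zmod_eq_zero_iff_dvd d M).1 hdM
        have h0 := Finset.mem_Icc.1 (hPN hmem0)
        have h1 := Finset.mem_Icc.1 (hPN hmem1)
        exact hd0 (Int.eq_zero_of_abs_lt_dvd hdvd (by rw [abs_lt]; omega))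
      exact ⟨a, d, L, hP, hinj, fun _ => hdM⟩
    · push_neg at hc2
      have hc1 : P.card = 1 := by omega
      obtain ⟨n, hn⟩ := Finset.card_eq_one.1 hc1
      refine ⟨n, 1, 1, ?_, ?_, by omega⟩
      · rw [hn]
        ext x
        simp
      · intro i hi j hj _
        simp only [Finset.mem_range] at hi hj
        omega
  have hcardL : P.card = L' := by
    rw [hPrep]
    rw [Finset.card_image_of_injOn (fun i hi j hj h => hInj i hi j hj h)]
    exact Finset.card_range L'
  have hLM : L' ≤ M := by omega
  -- the indicator function
  set Q : Finset (ZMod M) := P.image (fun n : ℤ => (n : ZMod M)) with hQ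
  set g : ZMod M → ℂ := fun x => if x ∈ Q then (1:ℂ) else 0 with hg
  have hsumP : ∑ n ∈ P, f (n : ZMod M) = ∑ x : ZMod M, f x * g x := by
    have h1 : ∑ x : ZMod M, f x * g x = ∑ x ∈ Q, f x := by
      rw [hg]
      simp only [mul_ite, mul_one, mul_zero]
      rw [Finset.sum_ite_mem, Finset.univ_inter]
    rw [h1, hQ, Finset.sum_image hcastinj]
  have hconjg : ∀ x, (starRingEnd ℂ) (g x) = g x := by
    intro x
    rw [hg]
    dsimp only
    split_ifs <;> simp
  have hSg : ∀ r : ZMod M, Sf g r =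
      ∑ i ∈ Finset.range L', ec (r * (((a' : ZMod M)) + (i : ZMod M) * ((d' : ZMod M)))) := by
    intro r
    rw [Sf]
    simp only [hg, mul_ite, mul_one, mul_zero]
    rw [Finset.sum_ite_mem, Finset.univ_inter, hQ, Finset.sum_image hcastinj, hPrep,
      Finset.sum_image (fun i hi j hj h => hInj i hi j hj h)]
    refine Finset.sum_congr rfl fun i _ => ?_
    congr 1
    push_cast
    ring
  -- Parseval pairing bound
  have hpair : ∑ r : ZMod M, Sf f r * (starRingEnd ℂ) (Sf g r)
      = (M:ℂ) * ∑ x : ZMod M, f x * g x := by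
    rw [pairing]
    congr 1
    exact Finset.sum_congr rfl fun x _ => by rw [hconjg]
  have hMC : (M:ℂ) ≠ 0 := by
    simp only [ne_eq, Nat.cast_eq_zero]
    omega
  have hnormsum : ‖∑ x : ZMod M, f x * g x‖
      ≤ (∑ r : ZMod M, ‖Sf f r‖ * ‖Sf g r‖) / M := by
    have h1 : ‖(M:ℂ) * ∑ x : ZMod M, f x * g x‖ = (M:ℝ) * ‖∑ x : ZMod M, f x * g x‖ := by
      rw [norm_mul, Complex.norm_natCast]
    rw [le_div_iff₀ hMR, mul_comm (‖_‖)]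
    rw [← h1, ← hpair]
    refine (norm_sum_le _ _).trans ?_
    refine Finset.sum_le_sum fun r _ => ?_
    rw [norm_mul, RCLike.norm_conj]
  -- Hölder
  set A4 : ℝ := ∑ r : ZMod M, ‖Sf f r‖ ^ (4:ℝ) with hA4
  set B : ℝ := ∑ r : ZMod M, ‖Sf g r‖ ^ ((4:ℝ)/3) with hB
  have hA4nn : 0 ≤ A4 := Finset.sum_nonneg fun r _ => Real.rpow_nonneg (norm_nonneg _) _
  have hBnn : 0 ≤ B := Finset.sum_nonneg fun r _ => Real.rpow_nonneg (norm_nonneg _) _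
  have hHolder : ∑ r : ZMod M, ‖Sf f r‖ * ‖Sf g r‖
      ≤ A4 ^ ((1:ℝ)/4) * B ^ ((3:ℝ)/4) := by
    have hconj : Real.HolderConjugate 4 (4/3) := ⟨by norm_num, by norm_num, by norm_num⟩
    have h := Real.inner_le_Lp_mul_Lq_of_nonneg Finset.univ hconj
      (fun r _ => norm_nonneg (Sf f r)) (fun r _ => norm_nonneg (Sf g r))
    rw [show (1:ℝ)/(4/3) = 3/4 by norm_num] at h
    exact h
  -- bound on B
  have hBbound : B ^ ((3:ℝ)/4) ≤ 10 * M := by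
    have hsum : B ≤ 10 * (M:ℝ) ^ ((4:ℝ)/3) := by
      rw [hB]
      rw [Finset.sum_congr rfl fun r _ => by rw [hSg r]]
      exact sum_l43 hMp _ _ L' hLM hdz
    calc B ^ ((3:ℝ)/4) ≤ (10 * (M:ℝ) ^ ((4:ℝ)/3)) ^ ((3:ℝ)/4) :=
          Real.rpow_le_rpow hBnn hsum (by norm_num)
      _ = 10 ^ ((3:ℝ)/4) * M := by
          rw [Real.mul_rpow (by norm_num) (Real.rpow_nonneg hMR.le _),
            ← Real.rpow_mul hMR.le]
          norm_num
      _ ≤ 10 * M := by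
          have : (10:ℝ) ^ ((3:ℝ)/4) ≤ 10 := by
            nth_rewrite 2 [show (10:ℝ) = 10 ^ (1:ℝ) from (Real.rpow_one _).symm]
            exact Real.rpow_le_rpow_of_exponent_le (by norm_num) (by norm_num)
          nlinarith
  -- the U² norm on the RHS
  set T : ℂ := ∑ x : ZMod M, ∑ h₁ : ZMod M, ∑ h₂ : ZMod M,
      f x * (starRingEnd ℂ) (f (x + h₁)) * (starRingEnd ℂ) (f (x + h₂)) * f (x + h₁ + h₂) with hT
  set W : ℝ := ∑ r : ZMod M, ‖Sf f r‖ ^ (4:ℕ) with hW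
  have hWnn : 0 ≤ W := Finset.sum_nonneg fun r _ => by positivity
  have hu2 : (M:ℂ) * T = ((W:ℝ):ℂ) := by
    rw [hT, u2 f, hW]
    push_cast
    rfl
  have hWA : A4 = W := by
    rw [hA4, hW]
    refine Finset.sum_congr rfl fun r _ => ?_
    rw [show ((4:ℝ)) = ((4:ℕ):ℝ) by norm_num, Real.rpow_natCast]
  have hRHSnorm : ‖(1 / (M:ℂ)^3) * T‖ = W / (M:ℝ)^4 := by
    have heq : (1 / (M:ℂ)^3) * T = ((W:ℝ):ℂ) / (M:ℂ)^4 := by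
      rw [eq_div_iff (pow_ne_zero 4 hMC)]
      field_simp
      linear_combination hu2
    rw [heq, norm_div, Complex.norm_real, Real.norm_eq_abs, _root_.abs_of_nonneg hWnn, norm_pow, Complex.norm_natCast]
  have hRHSq : ‖(1 / (M:ℂ)^3) * T‖ ^ ((1:ℝ)/4) = A4 ^ ((1:ℝ)/4) / M := by
    rw [hRHSnorm, hWA, Real.div_rpow hWnn (by positivity)]
    congr 1
    rw [← Real.rpow_natCast (M:ℝ) 4, ← Real.rpow_mul hMR.le]
    norm_num
  -- final chain
  have hA4q : 0 ≤ A4 ^ ((1:ℝ)/4) := Real.rpow_nonneg hA4nn _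
  have hLHS : ‖(P.card : ℂ)⁻¹ * ∑ n ∈ P, f (n : ZMod M)‖
      ≤ (P.card:ℝ)⁻¹ * ((A4 ^ ((1:ℝ)/4) * (10 * M)) / M) := by
    rw [norm_mul, norm_inv, Complex.norm_natCast, hsumP]
    refine mul_le_mul_of_nonneg_left ?_ (inv_nonneg.2 hcardR.le)
    refine hnormsum.trans ?_
    gcongr
    refine hHolder.trans ?_
    exact mul_le_mul_of_nonneg_left hBbound hA4q
  refine hLHS.trans ?_
  rw [hRHSq]
  have hkey : (P.card:ℝ)⁻¹ * ((A4 ^ ((1:ℝ)/4) * (10 * M)) / M)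
      = (10 / P.card) * A4 ^ ((1:ℝ)/4) := by
    rw [show (A4 ^ ((1:ℝ)/4) * (10 * (M:ℝ)))/(M:ℝ)
        = A4 ^ ((1:ℝ)/4) * 10 * ((M:ℝ) / M) by ring, div_self hMR.ne', mul_one,
      div_eq_mul_inv]
    ring
  rw [hkey]
  have hgoal : (10:ℝ) / P.card ≤ 100 * η⁻¹ / M := by
    rw [div_le_div_iff₀ hcardR hMR]
    have h1 : η * N ≤ P.card := hcard
    have h2 : (M:ℝ) ≤ 8 * N := by exact_mod_cast h8
    have hη' : 0 < η⁻¹ := by positivity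
    have h3 : (10:ℝ) * M ≤ 80 * N := by linarith
    have h4' : (80:ℝ) * N ≤ 100 * (η⁻¹ * P.card) := by
      have : (N:ℝ) ≤ η⁻¹ * P.card := by
        rw [← mul_le_mul_iff_right₀ hη]
        calc η * (N:ℝ) ≤ P.card := h1
          _ = η * (η⁻¹ * P.card) := by rw [← mul_assoc, mul_inv_cancel₀ hη.ne', one_mul]
      linarith
    linarith
  calc (10:ℝ) / P.card * A4 ^ ((1:ℝ)/4)
      ≤ (100 * η⁻¹ / M) * A4 ^ ((1:ℝ)/4) := mul_le_mul_of_nonneg_right hgoal hA4q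
    _ = 100 * η⁻¹ * (A4 ^ ((1:ℝ)/4) / M) := by ring
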